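/- Fix integers k ≤ n and l ≤ m. There exists a multivariate polynomial R with integer coefficients in the variables A_k, …, A_n, B_l, …, B_m which is homogeneous of degree m − l in the A-variables and homogeneous of degree n − k in the B-variables, such that for every choice of complex coefficients (a_k, …, a_n, b_l, …, b_m) with a_k·a_n·b_l·b_m ≠ 0 the evaluation of R at these coefficients equals b_l^{−k}·b_m^{n}·Π^{[1]}; moreover the coefficient of the monomial A_k^{m−l}·B_m^{n−k} in R equals (−1)^{k(m−l)}. -/

import Mathlib

open Polynomial AddMonoidAlgebra Finset


namespace Stmt6Aux

open MvPolynomial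

variable {R : Type*} [CommRing R]

lemma degreeOf_sum_le {σ ι : Type*} (j : σ) (s : Finset ι) (f : ι → MvPolynomial σ R) (K : ℕ)
    (h : ∀ i ∈ s, MvPolynomial.degreeOf j (f i) ≤ K) :
    MvPolynomial.degreeOf j (∑ i ∈ s, f i) ≤ K := by
  classical
  induction s using Finset.cons_induction with
  | empty => simp [MvPolynomial.degreeOf_zero]
  | cons a s ha ih =>
    rw [Finset.sum_cons]
    refine (MvPolynomial.degreeOf_add_le _ _ _).trans ?_
    exact sup_le (h a (Finset.mem_cons_self a s)) (ih fun i hi => h i (Finset.mem_cons_of_mem hi))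

lemma degreeOf_prod_le {σ ι : Type*} (j : σ) (s : Finset ι) (f : ι → MvPolynomial σ R)
    (g : ι → ℕ) (h : ∀ i ∈ s, MvPolynomial.degreeOf j (f i) ≤ g i) :
    MvPolynomial.degreeOf j (∏ i ∈ s, f i) ≤ ∑ i ∈ s, g i := by
  classical
  induction s using Finset.cons_induction with
  | empty =>
    simp only [Finset.prod_empty, Finset.sum_empty, ← MvPolynomial.C_1]
    exact le_of_eq (MvPolynomial.degreeOf_C _ _)
  | cons a s ha ih =>
    rw [Finset.prod_cons, Finset.sum_cons]
    refine (MvPolynomial.degreeOf_mul_le _ _ _).trans ?_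
    exact add_le_add (h a (Finset.mem_cons_self a s))
      (ih fun i hi => h i (Finset.mem_cons_of_mem hi))

lemma degreeOf_esymm_le {M : ℕ} (j : Fin M) (i : ℕ) :
    MvPolynomial.degreeOf j (esymm (Fin M) R i) ≤ 1 := by
  classical
  rw [esymm_eq_sum_monomial]
  refine degreeOf_sum_le j _ _ 1 fun t _ => ?_
  rw [MvPolynomial.degreeOf_le_iff]
  intro d hd
  have := MvPolynomial.support_monomial_subset hd
  rw [Finset.mem_singleton] at this
  subst this
  classical
  calc (∑ s ∈ t, Finsupp.single s (1:ℕ)) j = ∑ s ∈ t, Finsupp.single s (1:ℕ) j := by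
        rw [Finsupp.finset_sum_apply]
    _ ≤ 1 := by
        by_cases hj : j ∈ t
        · rw [Finset.sum_eq_single_of_mem j hj (fun b _ hb => Finsupp.single_eq_of_ne' hb)]
          simp
        · refine le_trans (le_of_eq (Finset.sum_eq_zero fun b hb => ?_)) zero_le_one
          exact Finsupp.single_eq_of_ne' (fun h => hj (h ▸ hb))

lemma degreeOf_esymmAlgHomMonomial_le {M : ℕ} (j : Fin M) (t : Fin M →₀ ℕ) (r : R) :
    MvPolynomial.degreeOf j (esymmAlgHomMonomial (Fin M) t r) ≤ t.sum fun _ e => e := by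
  classical
  rw [esymmAlgHomMonomial, esymmAlgHom_apply, MvPolynomial.aeval_monomial]
  refine (MvPolynomial.degreeOf_mul_le _ _ _).trans ?_
  have h1 : MvPolynomial.degreeOf j (algebraMap R (MvPolynomial (Fin M) R) r) = 0 := by
    rw [MvPolynomial.algebraMap_eq]; exact MvPolynomial.degreeOf_C _ _
  rw [h1, zero_add, Finsupp.prod, Finsupp.sum]
  refine degreeOf_prod_le j _ _ (fun s => t s) fun s _ => ?_
  have : (fun i : Fin M => esymm (Fin M) R ((i : ℕ) + 1)) s ^ t s
      = ∏ _x ∈ Finset.range (t s), esymm (Fin M) R ((s : ℕ) + 1) := by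
    rw [Finset.prod_const, Finset.card_range]
  rw [this]
  calc MvPolynomial.degreeOf j _ ≤ ∑ _x ∈ Finset.range (t s), 1 :=
        degreeOf_prod_le j _ _ (fun _ => 1) fun _ _ => degreeOf_esymm_le j _
    _ = t s := by rw [Finset.sum_const, Finset.card_range, smul_eq_mul, mul_one]

/-- Bounded fundamental theorem of symmetric polynomials. -/
lemma exists_rep {M K : ℕ} (p : MvPolynomial (Fin M) R)
    (hp : p.IsSymmetric) (hdeg : ∀ j, p.degreeOf j ≤ K) :
    ∃ q : MvPolynomial (Fin M) R, q.totalDegree ≤ K ∧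
      MvPolynomial.aeval (fun s : Fin M => esymm (Fin M) R ((s : ℕ) + 1)) q = p := by
  classical
  induction' he : p.supDegree toLex using WellFoundedLT.induction with d ih generalizing p
  subst he
  obtain rfl | h0 := eq_or_ne p 0
  · exact ⟨0, by simp, by simp⟩
  set t : Fin M →₀ ℕ :=
    Finsupp.equivFunOnFinite.symm (Fin.invAccumulate M M <| ↑(ofLex <| p.supDegree toLex)) with ht
  have hct : ⇑t = Fin.invAccumulate M M ↑(ofLex <| p.supDegree toLex) := rfl
  have hacc : Fin.accumulate M M ⇑t = ↑(ofLex (p.supDegree toLex)) := by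
    rw [hct]; exact Fin.accumulate_invAccumulate le_rfl hp.antitone_supDegree
  have hsupp : ofLex (p.supDegree toLex) ∈ p.support := by
    obtain ⟨a, ha, he⟩ := exists_supDegree_mem_support toLex h0
    rw [he]; exact ha
  have htsum : (t.sum fun _ e => e) ≤ K := by
    rcases Nat.eq_zero_or_pos M with hM | hM
    · subst hM
      have : t = 0 := Subsingleton.elim _ _
      simp [this]
    · have h0' : (ofLex (p.supDegree toLex)) ⟨0, hM⟩ ≤ K :=
        (MvPolynomial.degreeOf_le_iff.mp (hdeg ⟨0, hM⟩)) _ hsupp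
      have := congrFun hacc ⟨0, hM⟩
      rw [Fin.accumulate_apply] at this
      have hall : ∑ i : Fin M with (0:ℕ) ≤ i.val, t i = ∑ i : Fin M, t i := by
        congr 1
        refine Finset.filter_true_of_mem fun i _ => Nat.zero_le _
      rw [hall] at this
      calc (t.sum fun _ e => e) = ∑ i : Fin M, t i := Finsupp.sum_fintype _ _ fun _ => rfl
        _ = (ofLex (p.supDegree toLex)) ⟨0, hM⟩ := this
        _ ≤ K := h0'
  set r := p.leadingCoeff toLex with hr
  have hr0 : r ≠ 0 := (leadingCoeff_ne_zero toLex.injective).mpr h0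
  have hd : (esymmAlgHomMonomial (Fin M) t r).supDegree toLex = p.supDegree toLex := by
    rw [← ofLex_inj, DFunLike.ext'_iff]
    rw [supDegree_esymmAlgHomMonomial hr0 t le_rfl]
    exact hacc
  have haev : MvPolynomial.aeval (fun s : Fin M => esymm (Fin M) R ((s : ℕ) + 1))
      (MvPolynomial.monomial t r) = esymmAlgHomMonomial (Fin M) t r := by
    rw [esymmAlgHomMonomial, esymmAlgHom_apply]
  have hdegmono : (MvPolynomial.monomial t r).totalDegree ≤ K := by
    rw [MvPolynomial.totalDegree_monomial _ hr0]; exact htsum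
  obtain heq | hne := eq_or_ne p (esymmAlgHomMonomial (Fin M) t r)
  · exact ⟨MvPolynomial.monomial t r, hdegmono, by rw [haev, ← heq]⟩
  have hlt := (supDegree_sub_lt_of_leadingCoeff_eq toLex.injective hd.symm
    (by rw [leadingCoeff_esymmAlgHomMonomial t le_rfl])).resolve_right hne
  set p' := p - esymmAlgHomMonomial (Fin M) t r with hp'
  have hsym' : p'.IsSymmetric := hp.sub (isSymmetric_esymmAlgHomMonomial _ _)
  have hdeg' : ∀ j, p'.degreeOf j ≤ K := by
    intro j
    rw [hp', sub_eq_add_neg]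
    refine (MvPolynomial.degreeOf_add_le _ _ _).trans (sup_le (hdeg j) ?_)
    have : MvPolynomial.degreeOf j (-esymmAlgHomMonomial (Fin M) t r)
        = MvPolynomial.degreeOf j (esymmAlgHomMonomial (Fin M) t r) := by
      simp [MvPolynomial.degreeOf]
    rw [this]
    exact (degreeOf_esymmAlgHomMonomial_le j t r).trans htsum
  obtain ⟨q, hq1, hq2⟩ := ih _ hlt p' hsym' hdeg' rfl
  refine ⟨q + MvPolynomial.monomial t r, ?_, ?_⟩
  · exact (MvPolynomial.totalDegree_add _ _).trans (sup_le hq1 hdegmono)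
  · rw [map_add, hq2, haev, hp']; ring





lemma IsHom.homComp_same {σ : Type*} {n : ℕ} {p : MvPolynomial σ ℤ} (h : p.IsHomogeneous n) :
    homogeneousComponent n p = p := by
  ext d
  rw [coeff_homogeneousComponent]
  split_ifs with hd
  · rfl
  · exact (h.coeff_eq_zero hd).symm

variable (K M : ℕ)

/-- base ring: integer polynomials in the A-variables -/
abbrev R0 := MvPolynomial (Fin (K + 1)) ℤ

/-- the generic `P₁` evaluated at variable `Y_t` -/
noncomputable def genF (t : Fin M) : MvPolynomial (Fin M) (R0 K) :=
  ∑ i : Fin (K + 1), MvPolynomial.C (MvPolynomial.X i) * MvPolynomial.X t ^ (i : ℕ)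

/-- the generic product `∏_t P₁(Y_t)` -/
noncomputable def genP : MvPolynomial (Fin M) (R0 K) := ∏ t : Fin M, genF K M t

lemma genP_symm : (genP K M).IsSymmetric := by
  intro e
  rw [genP, map_prod]
  have h1 : ∀ t : Fin M, (rename ⇑e) (genF K M t) = genF K M (e t) := by
    intro t
    rw [genF, map_sum, genF]
    refine Finset.sum_congr rfl fun i _ => ?_
    rw [map_mul, map_pow, rename_C, rename_X]
  rw [Finset.prod_congr rfl fun t _ => h1 t]
  exact Equiv.prod_comp e _

lemma genF_degreeOf (j t : Fin M) : (genF K M t).degreeOf j ≤ K := by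
  rw [genF]
  refine (MvPolynomial.degreeOf_sum_le _ _ _).trans (Finset.sup_le fun i _ => ?_)
  refine (MvPolynomial.degreeOf_mul_le _ _ _).trans ?_
  have h1 : MvPolynomial.degreeOf j (MvPolynomial.C (MvPolynomial.X i) :
      MvPolynomial (Fin M) (R0 K)) = 0 := MvPolynomial.degreeOf_C _ _
  rw [h1, zero_add]
  refine (MvPolynomial.degreeOf_pow_le _ _ _).trans ?_
  have h2 : MvPolynomial.degreeOf j (MvPolynomial.X t : MvPolynomial (Fin M) (R0 K)) ≤ 1 := by
    classical
    rw [MvPolynomial.degreeOf_X]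
    split_ifs <;> omega
  calc (i : ℕ) * MvPolynomial.degreeOf j (MvPolynomial.X t : MvPolynomial (Fin M) (R0 K))
      ≤ (i : ℕ) * 1 := Nat.mul_le_mul_left _ h2
    _ = (i : ℕ) := Nat.mul_one _
    _ ≤ K := Fin.is_le i

lemma genP_degreeOf (j : Fin M) : (genP K M).degreeOf j ≤ K := by
  rw [genP]
  by_cases hj : True
  · refine (MvPolynomial.degreeOf_prod_le _ _ _).trans ?_
    -- only the factor t = j can have positive degree in Y_j
    calc ∑ t : Fin M, (genF K M t).degreeOf j
        ≤ ∑ t : Fin M, (if t = j then K else 0) := by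
          refine Finset.sum_le_sum fun t _ => ?_
          split_ifs with h
          · exact genF_degreeOf K M j t
          · -- t ≠ j : degree 0
            rw [Nat.le_zero, genF]
            rw [← Nat.le_zero]
            refine (MvPolynomial.degreeOf_sum_le _ _ _).trans (Finset.sup_le fun i _ => ?_)
            refine (MvPolynomial.degreeOf_mul_le _ _ _).trans ?_
            have h1 : MvPolynomial.degreeOf j (MvPolynomial.C (MvPolynomial.X i) :
                MvPolynomial (Fin M) (R0 K)) = 0 := MvPolynomial.degreeOf_C _ _
            refine le_of_eq ?_
            rw [h1, zero_add]
            refine Nat.eq_zero_of_le_zero ((MvPolynomial.degreeOf_pow_le _ _ _).trans ?_)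
            have h2 : MvPolynomial.degreeOf j (MvPolynomial.X t :
                MvPolynomial (Fin M) (R0 K)) = 0 := by
              classical
              rw [MvPolynomial.degreeOf_X]
              exact if_neg (fun hh => h hh.symm)
            rw [h2, Nat.mul_zero]
      _ = K := by rw [Finset.sum_ite_eq' Finset.univ j fun _ => K]; simp
  · simp at hj

lemma genP_coeff_hom (u : Fin M →₀ ℕ) : (MvPolynomial.coeff u (genP K M)).IsHomogeneous M := by
  classical
  rw [genP]
  suffices h : ∀ s : Finset (Fin M), ∀ u : Fin M →₀ ℕ,
      (MvPolynomial.coeff u (∏ t ∈ s, genF K M t)).IsHomogeneous s.card by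
    have := h Finset.univ u
    simpa using this
  intro s
  induction s using Finset.cons_induction with
  | empty =>
    intro u
    rw [Finset.prod_empty, Finset.card_empty, MvPolynomial.coeff_one]
    split_ifs
    · exact MvPolynomial.isHomogeneous_one _ _
    · exact MvPolynomial.isHomogeneous_zero _ _ _
  | cons a s ha ih =>
    intro u
    rw [Finset.prod_cons, Finset.card_cons, MvPolynomial.coeff_mul, ← mem_homogeneousSubmodule]
    refine Submodule.sum_mem _ fun vw hvw => ?_
    rw [mem_homogeneousSubmodule]
    have h2 : (MvPolynomial.coeff vw.1 (genF K M a)).IsHomogeneous 1 := by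
      rw [genF, MvPolynomial.coeff_sum, ← mem_homogeneousSubmodule]
      refine Submodule.sum_mem _ fun i _ => ?_
      rw [mem_homogeneousSubmodule, MvPolynomial.C_mul_X_pow_eq_monomial,
        MvPolynomial.coeff_monomial]
      split_ifs
      · exact MvPolynomial.isHomogeneous_X _ _
      · exact MvPolynomial.isHomogeneous_zero _ _ _
    have h3 := h2.mul (ih vw.2)
    rwa [add_comm (1 : ℕ) s.card] at h3

/-- evaluation of genP with all Y-variables set to 0 -/
lemma genP_aeval_zero :
    MvPolynomial.aeval (fun _ : Fin M => (0 : R0 K)) (genP K M) = MvPolynomial.X 0 ^ M := by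
  rw [genP, map_prod]
  have h1 : ∀ t : Fin M, MvPolynomial.aeval (fun _ : Fin M => (0 : R0 K)) (genF K M t)
      = MvPolynomial.X 0 := by
    intro t
    rw [genF, map_sum, Finset.sum_eq_single (0 : Fin (K + 1))]
    · rw [map_mul, MvPolynomial.aeval_C, map_pow, MvPolynomial.aeval_X]
      simp [MvPolynomial.algebraMap_eq]
    · intro i _ hi
      rw [map_mul, map_pow, MvPolynomial.aeval_X]
      have : (i : ℕ) ≠ 0 := fun h => hi (Fin.ext h)
      rw [zero_pow this, mul_zero]
    · intro h
      exact absurd (Finset.mem_univ _) h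
  rw [Finset.prod_congr rfl fun t _ => h1 t, Finset.prod_const, Finset.card_univ, Fintype.card_fin]


/-- the symmetric-function representation of `genP` -/
noncomputable def genQ : MvPolynomial (Fin M) (R0 K) :=
  (exists_rep (genP K M) (genP_symm K M) (genP_degreeOf K M)).choose

lemma genQ_totalDegree : (genQ K M).totalDegree ≤ K :=
  (exists_rep (genP K M) (genP_symm K M) (genP_degreeOf K M)).choose_spec.1

lemma genQ_aeval :
    MvPolynomial.aeval (fun s : Fin M => esymm (Fin M) (R0 K) ((s : ℕ) + 1)) (genQ K M)
      = genP K M :=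
  (exists_rep (genP K M) (genP_symm K M) (genP_degreeOf K M)).choose_spec.2

/-- monomial in elementary symmetric polynomials, over `R0 K` -/
noncomputable def Et (t : Fin M →₀ ℕ) : MvPolynomial (Fin M) (R0 K) :=
  t.prod fun s e => esymm (Fin M) (R0 K) ((s : ℕ) + 1) ^ e

/-- monomial in elementary symmetric polynomials, over `ℤ` -/
noncomputable def Etz (t : Fin M →₀ ℕ) : MvPolynomial (Fin M) ℤ :=
  t.prod fun s e => esymm (Fin M) ℤ ((s : ℕ) + 1) ^ e

lemma Et_eq_map (t : Fin M →₀ ℕ) :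
    MvPolynomial.map (Int.castRingHom (R0 K)) (Etz M t) = Et K M t := by
  rw [Et, Etz, Finsupp.prod, Finsupp.prod, map_prod]
  refine Finset.prod_congr rfl fun s _ => ?_
  rw [map_pow, MvPolynomial.map_esymm]

lemma coeff_Et (t u : Fin M →₀ ℕ) :
    MvPolynomial.coeff u (Et K M t)
      = MvPolynomial.C (MvPolynomial.coeff u (Etz M t)) := by
  rw [← Et_eq_map, MvPolynomial.coeff_map]
  exact (eq_intCast (MvPolynomial.C : ℤ →+* R0 K) _).symm

lemma aeval_expand (w : MvPolynomial (Fin M) (R0 K)) :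
    MvPolynomial.aeval (fun s : Fin M => esymm (Fin M) (R0 K) ((s : ℕ) + 1)) w
      = ∑ t ∈ w.support, MvPolynomial.C (MvPolynomial.coeff t w) * Et K M t := by
  conv_lhs => rw [w.as_sum]
  rw [map_sum]
  refine Finset.sum_congr rfl fun t _ => ?_
  rw [MvPolynomial.aeval_monomial, MvPolynomial.algebraMap_eq, Et]

/-- homogenized coefficients of `genQ` -/
noncomputable def cq (t : Fin M →₀ ℕ) : R0 K :=
  homogeneousComponent M (MvPolynomial.coeff t (genQ K M))

lemma key_sum :
    ∑ t ∈ (genQ K M).support, MvPolynomial.C (cq K M t) * Et K M t = genP K M := by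
  ext u
  rw [MvPolynomial.coeff_sum]
  have hL : ∀ t, MvPolynomial.coeff u (MvPolynomial.C (cq K M t) * Et K M t)
      = MvPolynomial.coeff u (Etz M t) • cq K M t := by
    intro t
    rw [MvPolynomial.coeff_C_mul, coeff_Et, mul_comm, ← MvPolynomial.smul_eq_C_mul]
  rw [Finset.sum_congr rfl fun t _ => hL t]
  have h2 : ∀ t, MvPolynomial.coeff u (Etz M t) • cq K M t
      = homogeneousComponent M (MvPolynomial.coeff u (Etz M t) • MvPolynomial.coeff t (genQ K M)) := by
    intro t
    rw [cq, map_zsmul]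
  rw [Finset.sum_congr rfl fun t _ => h2 t, ← map_sum]
  have h3 : ∑ t ∈ (genQ K M).support,
      MvPolynomial.coeff u (Etz M t) • MvPolynomial.coeff t (genQ K M)
      = MvPolynomial.coeff u (genP K M) := by
    rw [← genQ_aeval K M, aeval_expand, MvPolynomial.coeff_sum]
    refine Finset.sum_congr rfl fun t _ => ?_
    rw [MvPolynomial.coeff_C_mul, coeff_Et, mul_comm, ← MvPolynomial.smul_eq_C_mul]
  rw [h3, IsHom.homComp_same (genP_coeff_hom K M u)]

lemma esymm_aeval_zero (n : ℕ) (hn : n ≠ 0) :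
    MvPolynomial.aeval (fun _ : Fin M => (0 : R0 K)) (esymm (Fin M) (R0 K) n) = 0 := by
  rw [aeval_esymm_eq_multiset_esymm]
  have h1 : Multiset.map (fun _ : Fin M => (0 : R0 K)) Finset.univ.val
      = Multiset.replicate (Multiset.card Finset.univ.val) (0 : R0 K) := Multiset.map_const' _ _
  rw [h1, Multiset.esymm]
  refine Multiset.sum_eq_zero fun x hx => ?_
  rw [Multiset.mem_map] at hx
  obtain ⟨mset, hm, rfl⟩ := hx
  rw [Multiset.mem_powersetCard] at hm
  have hcard : mset ≠ 0 := by
    intro h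
    rw [h] at hm
    simp at hm
    omega
  obtain ⟨x, hxm⟩ := Multiset.exists_mem_of_ne_zero hcard
  have hx0 : x = 0 := Multiset.eq_of_mem_replicate (Multiset.mem_of_le hm.1 hxm)
  exact Multiset.prod_eq_zero (hx0 ▸ hxm)

lemma genQ_coeff_zero : MvPolynomial.coeff 0 (genQ K M) = MvPolynomial.X 0 ^ M := by
  have h0 := genQ_aeval K M
  have happ := congrArg (MvPolynomial.aeval (fun _ : Fin M => (0 : R0 K))) h0
  rw [genP_aeval_zero] at happ
  rw [MvPolynomial.comp_aeval_apply] at happ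
  have hfun : (fun i : Fin M => (MvPolynomial.aeval fun _ : Fin M => (0 : R0 K))
      (esymm (Fin M) (R0 K) ((i : ℕ) + 1))) = (0 : Fin M → R0 K) :=
    by
      funext i
      rw [Pi.zero_apply]
      exact esymm_aeval_zero K M ((i : ℕ) + 1) (Nat.succ_ne_zero _)
  rw [hfun, MvPolynomial.aeval_zero] at happ
  rw [← MvPolynomial.constantCoeff_eq]
  rwa [Algebra.algebraMap_self, RingHom.id_apply] at happ

lemma zero_mem_genQ_support : (0 : Fin M →₀ ℕ) ∈ (genQ K M).support := by
  rw [MvPolynomial.mem_support_iff, genQ_coeff_zero]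
  exact pow_ne_zero _ (MvPolynomial.X_ne_zero _)

lemma cq_zero : cq K M 0 = MvPolynomial.X 0 ^ M := by
  rw [cq, genQ_coeff_zero]
  exact IsHom.homComp_same (by simpa using (MvPolynomial.isHomogeneous_X ℤ (0 : Fin (K + 1))).pow M)

lemma cq_hom (t : Fin M →₀ ℕ) : (cq K M t).IsHomogeneous M :=
  homogeneousComponent_isHomogeneous _ _

section genR

def idx (s : Fin M) : Fin (M + 1) := ⟨M - 1 - (s : ℕ), by omega⟩

lemma idx_injective : Function.Injective (idx M) := by
  intro s s' h
  have h1 := congrArg (fun x : Fin (M + 1) => (x : ℕ)) h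
  simp only [idx] at h1
  have := s.isLt
  have := s'.isLt
  exact Fin.ext (by omega)

lemma idx_ne_last (s : Fin M) : idx M s ≠ Fin.last M := by
  intro h
  have h1 := congrArg (fun x : Fin (M + 1) => (x : ℕ)) h
  simp only [idx, Fin.last] at h1
  have := s.isLt
  omega

/-- the `B`-monomial exponents associated with `t` (without the `B_M` padding) -/
noncomputable def ut1 (t : Fin M →₀ ℕ) : (Fin (K + 1) ⊕ Fin (M + 1)) →₀ ℕ :=
  t.sum fun s e => Finsupp.single (Sum.inr (idx M s)) e

/-- the `B`-monomial exponents associated with `t` -/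
noncomputable def ut (t : Fin M →₀ ℕ) : (Fin (K + 1) ⊕ Fin (M + 1)) →₀ ℕ :=
  ut1 K M t + Finsupp.single (Sum.inr (Fin.last M)) (K - t.sum fun _ e => e)

def sgn (t : Fin M →₀ ℕ) : ℤ := (-1) ^ (t.sum fun s e => ((s : ℕ) + 1) * e)

/-- the generic resultant-like integer polynomial -/
noncomputable def genR : MvPolynomial (Fin (K + 1) ⊕ Fin (M + 1)) ℤ :=
  ∑ t ∈ (genQ K M).support,
    rename Sum.inl (cq K M t) * MvPolynomial.monomial (ut K M t) (sgn M t)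

lemma ut1_apply_inl (t : Fin M →₀ ℕ) (i : Fin (K + 1)) : ut1 K M t (Sum.inl i) = 0 := by
  rw [ut1, Finsupp.sum_apply, Finsupp.sum]
  exact Finset.sum_eq_zero fun s _ => Finsupp.single_eq_of_ne (by simp)

lemma ut_apply_inl (t : Fin M →₀ ℕ) (i : Fin (K + 1)) : ut K M t (Sum.inl i) = 0 := by
  rw [ut, Finsupp.add_apply, ut1_apply_inl, Finsupp.single_eq_of_ne (by simp), add_zero]

lemma ut1_apply_inr (t : Fin M →₀ ℕ) (s : Fin M) :
    ut1 K M t (Sum.inr (idx M s)) = t s := by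
  classical
  rw [ut1, Finsupp.sum_apply, Finsupp.sum]
  by_cases hs : s ∈ t.support
  · rw [Finset.sum_eq_single_of_mem s hs]
    · rw [Finsupp.single_eq_same]
    · intro s' _ hne
      exact Finsupp.single_eq_of_ne' (by
        simp only [ne_eq, Sum.inr.injEq]
        exact fun h => hne (idx_injective M h))
  · rw [Finsupp.notMem_support_iff] at hs
    rw [hs]
    refine Finset.sum_eq_zero fun s' hs' => ?_
    refine Finsupp.single_eq_of_ne' ?_
    simp only [ne_eq, Sum.inr.injEq]
    intro h
    have := idx_injective M h
    subst this
    rw [Finsupp.mem_support_iff] at hs'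
    exact hs' hs

lemma sum_ut_inr (t : Fin M →₀ ℕ) (hle : (t.sum fun _ e => e) ≤ K) :
    ∑ j : Fin (M + 1), ut K M t (Sum.inr j) = K := by
  classical
  have h1 : ∑ j : Fin (M + 1), ut1 K M t (Sum.inr j) = t.sum fun _ e => e := by
    have hswap : ∑ j : Fin (M + 1), ut1 K M t (Sum.inr j)
        = ∑ s ∈ t.support, ∑ j : Fin (M + 1), Finsupp.single (Sum.inr (idx M s) :
            Fin (K + 1) ⊕ Fin (M + 1)) (t s) (Sum.inr j) := by
      rw [Finset.sum_comm]
      refine Finset.sum_congr rfl fun j _ => ?_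
      rw [ut1, Finsupp.sum_apply, Finsupp.sum]
    rw [hswap, Finsupp.sum]
    refine Finset.sum_congr rfl fun s _ => ?_
    rw [Finset.sum_eq_single_of_mem (idx M s) (Finset.mem_univ _)]
    · rw [Finsupp.single_eq_same]
    · intro j _ hne
      exact Finsupp.single_eq_of_ne' (by simpa [ne_eq, Sum.inr.injEq] using (Ne.symm hne))
  have h2 : ∑ j : Fin (M + 1), Finsupp.single (Sum.inr (Fin.last M) :
      Fin (K + 1) ⊕ Fin (M + 1)) (K - t.sum fun _ e => e) (Sum.inr j)
      = K - t.sum fun _ e => e := by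
    rw [Finset.sum_eq_single_of_mem (Fin.last M) (Finset.mem_univ _)]
    · rw [Finsupp.single_eq_same]
    · intro j _ hne
      exact Finsupp.single_eq_of_ne' (by simpa [ne_eq, Sum.inr.injEq] using (Ne.symm hne))
  have h3 : ∑ j : Fin (M + 1), ut K M t (Sum.inr j)
      = (∑ j : Fin (M + 1), ut1 K M t (Sum.inr j))
        + ∑ j : Fin (M + 1), Finsupp.single (Sum.inr (Fin.last M) :
            Fin (K + 1) ⊕ Fin (M + 1)) (K - t.sum fun _ e => e) (Sum.inr j) := by
    rw [← Finset.sum_add_distrib]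
    refine Finset.sum_congr rfl fun j _ => ?_
    rw [ut, Finsupp.add_apply]
  rw [h3, h1, h2]
  omega

lemma genQ_support_sum_le (t : Fin M →₀ ℕ) (ht : t ∈ (genQ K M).support) :
    (t.sum fun _ e => e) ≤ K :=
  (MvPolynomial.le_totalDegree ht).trans (genQ_totalDegree K M)

lemma genR_support (d : (Fin (K + 1) ⊕ Fin (M + 1)) →₀ ℕ) (hd : d ∈ (genR K M).support) :
    (∑ i : Fin (K + 1), d (Sum.inl i)) = M ∧ (∑ j : Fin (M + 1), d (Sum.inr j)) = K := by
  classical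
  rw [MvPolynomial.mem_support_iff, genR, MvPolynomial.coeff_sum] at hd
  obtain ⟨t, ht, hne⟩ := Finset.exists_ne_zero_of_sum_ne_zero hd
  rw [← MvPolynomial.mem_support_iff] at hne
  have hsub := MvPolynomial.support_mul _ _ hne
  rw [Finset.mem_add] at hsub
  obtain ⟨d1, hd1, d2, hd2, rfl⟩ := hsub
  rw [MvPolynomial.support_rename_of_injective Sum.inl_injective, Finset.mem_image] at hd1
  obtain ⟨e, he, rfl⟩ := hd1
  have hd2' : d2 = ut K M t := by
    have := MvPolynomial.support_monomial_subset hd2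
    rwa [Finset.mem_singleton] at this
  subst hd2'
  have hesum : ∑ i : Fin (K + 1), e i = M := by
    have hh := (cq_hom K M t) (MvPolynomial.mem_support_iff.mp he)
    have hdeg : (Finsupp.weight 1) e = e.sum fun _ n => n := by
      simp [Finsupp.weight_apply, Finsupp.sum, mul_comm, smul_eq_mul]
    rw [hdeg] at hh
    rw [← hh, Finsupp.sum_fintype]
    exact fun _ => rfl
  have h1 : ∀ j : Fin (M + 1), (Finsupp.mapDomain Sum.inl e :
      (Fin (K + 1) ⊕ Fin (M + 1)) →₀ ℕ) (Sum.inr j) = 0 := by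
    intro j
    refine Finsupp.mapDomain_notin_range _ _ ?_
    rintro ⟨i, hi⟩
    exact Sum.inl_ne_inr hi
  constructor
  · have hterm : ∀ i : Fin (K + 1),
        (Finsupp.mapDomain Sum.inl e + ut K M t : (Fin (K + 1) ⊕ Fin (M + 1)) →₀ ℕ) (Sum.inl i) = e i := by
      intro i
      rw [Finsupp.add_apply, ut_apply_inl, add_zero,
        Finsupp.mapDomain_apply Sum.inl_injective]
    exact (Finset.sum_congr rfl fun i _ => hterm i).trans hesum
  · have h2 : ∀ j : Fin (M + 1),
        (Finsupp.mapDomain Sum.inl e + ut K M t : (Fin (K + 1) ⊕ Fin (M + 1)) →₀ ℕ) (Sum.inr j) = ut K M t (Sum.inr j) := by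
      intro j
      rw [Finsupp.add_apply, h1, zero_add]
    exact (Finset.sum_congr rfl fun j _ => h2 j).trans
      (sum_ut_inr K M t (genQ_support_sum_le K M t ht))

lemma genR_coeff :
    MvPolynomial.coeff
      (Finsupp.single (Sum.inl (0 : Fin (K + 1))) M
        + Finsupp.single (Sum.inr (Fin.last M)) K) (genR K M) = 1 := by
  classical
  rw [genR, MvPolynomial.coeff_sum]
  rw [Finset.sum_eq_single_of_mem 0 (zero_mem_genQ_support K M)]
  · have hut : ut K M 0 = Finsupp.single (Sum.inr (Fin.last M)) K := by
      rw [ut, ut1, Finsupp.sum_zero_index, zero_add, Finsupp.sum_zero_index, Nat.sub_zero]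
    have hsgn : sgn M 0 = 1 := by rw [sgn, Finsupp.sum_zero_index, pow_zero]
    rw [hut, hsgn, cq_zero, MvPolynomial.coeff_mul_monomial']
    rw [if_pos le_add_self]
    rw [add_tsub_cancel_right, mul_one]
    have h1 : (Finsupp.single (Sum.inl (0 : Fin (K + 1))) M :
        (Fin (K + 1) ⊕ Fin (M + 1)) →₀ ℕ)
        = Finsupp.mapDomain Sum.inl (Finsupp.single (0 : Fin (K + 1)) M) := by
      rw [Finsupp.mapDomain_single]
    rw [h1, MvPolynomial.coeff_rename_mapDomain _ Sum.inl_injective,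
      MvPolynomial.X_pow_eq_monomial, MvPolynomial.coeff_monomial, if_pos rfl]
  · intro t ht htne
    rw [MvPolynomial.coeff_mul_monomial']
    rw [if_neg]
    obtain ⟨s, hs⟩ : ∃ s, t s ≠ 0 := by
      by_contra hc
      push_neg at hc
      exact htne (Finsupp.ext fun s => hc s)
    intro hle
    have h2 : ut K M t (Sum.inr (idx M s)) = t s := by
      rw [ut, Finsupp.add_apply, ut1_apply_inr,
        Finsupp.single_eq_of_ne' (fun h => idx_ne_last M s (Sum.inr_injective h).symm), add_zero]
    have h3 := hle (Sum.inr (idx M s))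
    rw [h2, Finsupp.add_apply, Finsupp.single_eq_of_ne' (by simp),
      Finsupp.single_eq_of_ne' (fun h => idx_ne_last M s (Sum.inr_injective h).symm)] at h3
    omega

lemma genR_aeval (a : Fin (K + 1) → ℂ) (b : Fin (M + 1) → ℂ) :
    MvPolynomial.aeval (Sum.elim a b) (genR K M)
      = ∑ t ∈ (genQ K M).support,
          MvPolynomial.aeval a (cq K M t) * ((sgn M t : ℤ) : ℂ)
            * (t.prod fun s e => b (idx M s) ^ e)
            * b (Fin.last M) ^ (K - t.sum fun _ e => e) := by
  rw [genR, map_sum]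
  refine Finset.sum_congr rfl fun t _ => ?_
  rw [map_mul, MvPolynomial.aeval_rename]
  have hinl : Sum.elim a b ∘ Sum.inl = a := rfl
  rw [hinl, MvPolynomial.aeval_monomial]
  have halg : algebraMap ℤ ℂ (sgn M t) = ((sgn M t : ℤ) : ℂ) := rfl
  rw [halg]
  have hprod : ((ut K M t).prod fun x e => Sum.elim a b x ^ e)
      = (t.prod fun s e => b (idx M s) ^ e) * b (Fin.last M) ^ (K - t.sum fun _ e => e) := by
    rw [ut, Finsupp.prod_add_index (fun _ _ => pow_zero _) (fun _ _ _ _ => pow_add _ _ _)]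
    congr 1
    · rw [ut1, Finsupp.prod_sum_index (fun _ => pow_zero _) (fun _ _ _ => pow_add _ _ _)]
      refine Finsupp.prod_congr fun s _ => ?_
      exact Finsupp.prod_single_index (pow_zero _)
    · exact Finsupp.prod_single_index (pow_zero _)
  rw [hprod]
  ring

end genR

section complexEval

open Polynomial

variable (a : Fin (K + 1) → ℂ) (b : Fin (M + 1) → ℂ)

/-- the concrete polynomial `P₂` -/
noncomputable def P2 : ℂ[X] := ∑ j : Fin (M + 1), Polynomial.C (b j) * Polynomial.X ^ (j : ℕ)

/-- the concrete polynomial `P₁` -/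
noncomputable def P1 : ℂ[X] := ∑ i : Fin (K + 1), Polynomial.C (a i) * Polynomial.X ^ (i : ℕ)

lemma coeff_P2 (j : Fin (M + 1)) : (P2 M b).coeff (j : ℕ) = b j := by
  rw [P2, Polynomial.finset_sum_coeff]
  rw [Finset.sum_eq_single_of_mem j (Finset.mem_univ _)]
  · rw [Polynomial.coeff_C_mul, Polynomial.coeff_X_pow, if_pos rfl, mul_one]
  · intro j' _ hne
    rw [Polynomial.coeff_C_mul, Polynomial.coeff_X_pow,
      if_neg (fun h => hne (Fin.ext h.symm)), mul_zero]

variable (hbM : b (Fin.last M) ≠ 0)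

include hbM in
lemma natDegree_P2 : (P2 M b).natDegree = M := by
  refine le_antisymm ?_ ?_
  · rw [P2]
    refine Polynomial.natDegree_sum_le_of_forall_le _ _ fun j _ => ?_
    refine (Polynomial.natDegree_C_mul_le _ _).trans ?_
    rw [Polynomial.natDegree_X_pow]
    exact Fin.is_le j
  · refine Polynomial.le_natDegree_of_ne_zero ?_
    have h2 := coeff_P2 M b (Fin.last M)
    rw [Fin.val_last] at h2
    rw [h2]
    exact hbM

include hbM in
lemma leadingCoeff_P2 : (P2 M b).leadingCoeff = b (Fin.last M) := by
  rw [Polynomial.leadingCoeff, natDegree_P2 M b hbM]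
  have h2 := coeff_P2 M b (Fin.last M)
  rw [Fin.val_last] at h2
  exact h2

include hbM in
lemma card_roots_P2 : Multiset.card (P2 M b).roots = M := by
  have h := Polynomial.splits_iff_card_roots.mp (IsAlgClosed.splits (P2 M b))
  rw [natDegree_P2 M b hbM] at h
  exact h

include hbM in
lemma vieta_P2 (j : Fin (M + 1)) :
    b j = b (Fin.last M)
      * ((-1) ^ (M - (j : ℕ)) * ((P2 M b).roots.esymm (M - (j : ℕ)))) := by
  have hsp := Polynomial.Splits.eq_prod_roots
    (f := P2 M b) (IsAlgClosed.splits _)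
  rw [leadingCoeff_P2 M b hbM] at hsp
  have h1 : (P2 M b).coeff (j : ℕ) = b j := coeff_P2 M b j
  rw [hsp] at h1
  rw [Polynomial.coeff_C_mul] at h1
  rw [Multiset.prod_X_sub_C_coeff _ (by rw [card_roots_P2 M b hbM]; exact Fin.is_le j)] at h1
  rw [card_roots_P2 M b hbM] at h1
  exact h1.symm

include hbM in
lemma main_eval :
    MvPolynomial.aeval (Sum.elim a b) (genR K M)
      = b (Fin.last M) ^ K
        * ((P2 M b).roots.map fun z => Polynomial.eval z (P1 K a)).prod := by
  classical
  have hcard : Multiset.card (P2 M b).roots = M := card_roots_P2 M b hbM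
  set ys : Multiset ℂ := (P2 M b).roots with hys_def
  set L : List ℂ := ys.toList with hL_def
  have hLlen : L.length = M := by rw [hL_def, Multiset.length_toList, hcard]
  set y : Fin M → ℂ := fun i => L.get (Fin.cast hLlen.symm i) with hy_def
  have hofn : List.ofFn y = L := by
    refine List.ext_get (by rw [List.length_ofFn, hLlen]) fun n h1 h2 => ?_
    rw [List.get_ofFn]
    rfl
  have hys : Multiset.map y Finset.univ.val = ys := by
    have h1 : (Finset.univ.val : Multiset (Fin M)) = ↑(List.finRange M) := rfl
    rw [h1, Multiset.map_coe, ← List.ofFn_eq_map, hofn, hL_def, Multiset.coe_toList]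
  have hprodmap : ∀ g : ℂ → ℂ, (ys.map g).prod = ∏ i : Fin M, g (y i) := by
    intro g
    rw [← hys, Multiset.map_map, Finset.prod_eq_multiset_prod]
    rfl
  -- the evaluation homomorphism
  set χ : R0 K →+* ℂ := (MvPolynomial.aeval a : R0 K →ₐ[ℤ] ℂ).toRingHom with hχ_def
  set Ev : MvPolynomial (Fin M) (R0 K) →+* ℂ := MvPolynomial.eval₂Hom χ y with hEv_def
  have hEvesymm : ∀ n : ℕ, Ev (esymm (Fin M) (R0 K) n) = ys.esymm n := by
    intro n
    have hm : MvPolynomial.map (Int.castRingHom (R0 K)) (esymm (Fin M) ℤ n)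
        = esymm (Fin M) (R0 K) n := by rw [MvPolynomial.map_esymm]
    rw [← hm, hEv_def, MvPolynomial.eval₂Hom_map_hom]
    have hcom : χ.comp (Int.castRingHom (R0 K)) = algebraMap ℤ ℂ := Subsingleton.elim _ _
    rw [hcom]
    have h4 := MvPolynomial.aeval_esymm_eq_multiset_esymm (Fin M) ℤ n y
    rw [MvPolynomial.aeval_def] at h4
    show MvPolynomial.eval₂ (algebraMap ℤ ℂ) y (esymm (Fin M) ℤ n) = ys.esymm n
    rw [h4, hys]
  -- Ev of the generic product is the product of evaluations of P1 at the roots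
  have hEvgenP : Ev (genP K M) = ∏ t : Fin M, Polynomial.eval (y t) (P1 K a) := by
    rw [genP, map_prod]
    refine Finset.prod_congr rfl fun t _ => ?_
    rw [genF, map_sum, P1, Polynomial.eval_finset_sum]
    refine Finset.sum_congr rfl fun i _ => ?_
    rw [map_mul, map_pow, MvPolynomial.eval₂Hom_C, MvPolynomial.eval₂Hom_X']
    rw [Polynomial.eval_mul, Polynomial.eval_pow, Polynomial.eval_C, Polynomial.eval_X]
    have hXi : χ (MvPolynomial.X i) = a i := by
      rw [hχ_def]
      simp
    rw [hXi]
  -- Vieta in convenient form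
  have hvieta : ∀ s : Fin M, b (Fin.last M) * ys.esymm ((s : ℕ) + 1)
      = (-1) ^ ((s : ℕ) + 1) * b (idx M s) := by
    intro s
    have h1 := vieta_P2 M b hbM (idx M s)
    have hidx : M - ((idx M s : Fin (M + 1)) : ℕ) = (s : ℕ) + 1 := by
      have hs := s.isLt
      simp only [idx]
      omega
    rw [hidx] at h1
    rw [h1]
    have h2 : ((-1 : ℂ)) ^ ((s : ℕ) + 1) * (-1) ^ ((s : ℕ) + 1) = 1 := by
      rw [← pow_add]
      exact Even.neg_one_pow ⟨(s : ℕ) + 1, by ring⟩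
    ring_nf
    ring_nf at h2
    rw [h2, mul_one]
  -- main computation
  rw [genR_aeval]
  have hrhs : b (Fin.last M) ^ K * (ys.map fun z => Polynomial.eval z (P1 K a)).prod
      = b (Fin.last M) ^ K * Ev (genP K M) := by rw [hEvgenP, hprodmap]
  rw [hrhs, ← key_sum K M, map_sum, Finset.mul_sum]
  refine Finset.sum_congr rfl fun t ht => ?_
  have hEt : Ev (Et K M t) = t.prod fun s e => (ys.esymm ((s : ℕ) + 1)) ^ e := by
    rw [Et, Finsupp.prod, map_prod, Finsupp.prod]
    refine Finset.prod_congr rfl fun s _ => ?_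
    rw [map_pow, hEvesymm]
  rw [map_mul, MvPolynomial.eval₂Hom_C, hEt]
  -- split the power of b_M
  have hsum_le : (t.sum fun _ e => e) ≤ K := genQ_support_sum_le K M t ht
  have hKsplit : b (Fin.last M) ^ K
      = b (Fin.last M) ^ (t.sum fun _ e => e) * b (Fin.last M) ^ (K - t.sum fun _ e => e) := by
    rw [← pow_add]
    congr 1
    omega
  have hsum_pow : b (Fin.last M) ^ (t.sum fun _ e => e)
      = ∏ s ∈ t.support, b (Fin.last M) ^ t s := by
    rw [Finsupp.sum, Finset.prod_pow_eq_pow_sum]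
  have hmid : b (Fin.last M) ^ (t.sum fun _ e => e)
        * (t.prod fun s e => (ys.esymm ((s : ℕ) + 1)) ^ e)
      = ((sgn M t : ℤ) : ℂ) * t.prod fun s e => b (idx M s) ^ e := by
    rw [hsum_pow, Finsupp.prod, Finsupp.prod, ← Finset.prod_mul_distrib]
    have h1 : ∀ s ∈ t.support, b (Fin.last M) ^ t s * (ys.esymm ((s : ℕ) + 1)) ^ t s
        = (-1 : ℂ) ^ (((s : ℕ) + 1) * t s) * b (idx M s) ^ t s := by
      intro s _
      rw [← mul_pow, hvieta s, mul_pow, ← pow_mul]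
    rw [Finset.prod_congr rfl h1, Finset.prod_mul_distrib, Finset.prod_pow_eq_pow_sum]
    have h2 : ((sgn M t : ℤ) : ℂ) = (-1 : ℂ) ^ ∑ s ∈ t.support, ((s : ℕ) + 1) * t s := by
      rw [sgn, Finsupp.sum]
      push_cast
      ring
    rw [h2]
  calc MvPolynomial.aeval a (cq K M t) * ((sgn M t : ℤ) : ℂ)
        * (t.prod fun s e => b (idx M s) ^ e)
        * b (Fin.last M) ^ (K - t.sum fun _ e => e)
      = MvPolynomial.aeval a (cq K M t)
        * ((((sgn M t : ℤ) : ℂ) * t.prod fun s e => b (idx M s) ^ e)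
          * b (Fin.last M) ^ (K - t.sum fun _ e => e)) := by ring
    _ = b (Fin.last M) ^ K
        * (χ (cq K M t) * t.prod fun s e => (ys.esymm ((s : ℕ) + 1)) ^ e) := by
      rw [← hmid, hKsplit]
      have hχa : χ (cq K M t) = MvPolynomial.aeval a (cq K M t) := rfl
      rw [hχa]
      ring

end complexEval

lemma neg_one_zpow_natAbs (r : ℤ) : ((-1 : ℂ)) ^ r = (((-1 : ℤ) ^ r.natAbs : ℤ) : ℂ) := by
  obtain ⟨n, rfl | rfl⟩ := r.eq_nat_or_neg
  · rw [zpow_natCast, Int.natAbs_natCast]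
    push_cast
    ring
  · rw [zpow_neg, zpow_natCast, Int.natAbs_neg, Int.natAbs_natCast]
    rcases Nat.even_or_odd n with h | h
    · rw [h.neg_one_pow, h.neg_one_pow]
      norm_num
    · rw [h.neg_one_pow, h.neg_one_pow]
      norm_num

end Stmt6Aux

open Stmt6Aux in
/-- Fix integers `k ≤ n`, `l ≤ m`; set `K = n - k`, `M = m - l`. There is a
multivariate integer polynomial `R` in variables `A_k, …, A_n` (indexed by `Fin (K+1)`,
`Sum.inl i ↔ A_{k+i}`) and `B_l, …, B_m` (indexed by `Fin (M+1)`, `Sum.inr j ↔ B_{l+j}`),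
homogeneous of degree `M = m - l` in the `A`-variables and of degree `K = n - k` in the
`B`-variables, whose coefficient at the monomial `A_k^{m-l} B_m^{n-k}` is `(-1)^{k(m-l)}`,
and whose value at any coefficients `(a, b)` with `a_k a_n b_l b_m ≠ 0` equals
`b_l^{-k} b_m^{n} Π^{[1]}` for the Laurent polynomials `f₁ z = z^k P₁ z`, `f₂ z = z^l P₂ z`
with `P₁ = ∑ a_i X^i`, `P₂ = ∑ b_j X^j`. -/
theorem stmt6 (k n l m : ℤ) (hkn : k ≤ n) (hlm : l ≤ m) :
    ∃ R : MvPolynomial (Fin ((n - k).toNat + 1) ⊕ Fin ((m - l).toNat + 1)) ℤ,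
      (∀ d ∈ R.support,
          (∑ i : Fin ((n - k).toNat + 1), d (Sum.inl i)) = (m - l).toNat ∧
          (∑ j : Fin ((m - l).toNat + 1), d (Sum.inr j)) = (n - k).toNat) ∧
      MvPolynomial.coeff
          (Finsupp.single (Sum.inl (0 : Fin ((n - k).toNat + 1))) (m - l).toNat +
            Finsupp.single (Sum.inr (Fin.last (m - l).toNat)) (n - k).toNat) R =
        (-1 : ℤ) ^ (k * (m - l)).natAbs ∧
      ∀ (a : Fin ((n - k).toNat + 1) → ℂ) (b : Fin ((m - l).toNat + 1) → ℂ),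
        a 0 ≠ 0 → a (Fin.last (n - k).toNat) ≠ 0 →
        b 0 ≠ 0 → b (Fin.last (m - l).toNat) ≠ 0 →
        MvPolynomial.aeval (Sum.elim a b) R =
          (b 0) ^ (-k) * (b (Fin.last (m - l).toNat)) ^ n *
            (((∑ j : Fin ((m - l).toNat + 1), C (b j) * X ^ (j : ℕ)).roots.map
              fun y => y ^ k *
                (∑ i : Fin ((n - k).toNat + 1), C (a i) * X ^ (i : ℕ)).eval y).prod) := by
  classical
  set K : ℕ := (n - k).toNat with hK
  set M : ℕ := (m - l).toNat with hM
  have hKint : (K : ℤ) = n - k := Int.toNat_of_nonneg (sub_nonneg.mpr hkn)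
  have hMint : (M : ℤ) = m - l := Int.toNat_of_nonneg (sub_nonneg.mpr hlm)
  refine ⟨MvPolynomial.C ((-1 : ℤ) ^ (k * (m - l)).natAbs) * genR K M, ?_, ?_, ?_⟩
  · intro d hd
    refine genR_support K M d ?_
    rw [MvPolynomial.mem_support_iff] at hd ⊢
    rw [MvPolynomial.coeff_C_mul] at hd
    exact right_ne_zero_of_mul hd
  · rw [MvPolynomial.coeff_C_mul, genR_coeff, mul_one]
  · intro a b ha0 haK hb0 hbM
    rw [map_mul, MvPolynomial.algHom_C, main_eval K M a b hbM]
    have hcast : (algebraMap ℤ ℂ) ((-1 : ℤ) ^ (k * (m - l)).natAbs)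
        = (((-1 : ℤ) ^ (k * (m - l)).natAbs : ℤ) : ℂ) := by simp
    rw [hcast]
    have hP2 : (∑ j : Fin (M + 1), Polynomial.C (b j) * Polynomial.X ^ (j : ℕ)) = P2 M b := rfl
    have hP1 : (∑ i : Fin (K + 1), Polynomial.C (a i) * Polynomial.X ^ (i : ℕ)) = P1 K a := rfl
    rw [hP2, hP1]
    set ys : Multiset ℂ := (P2 M b).roots with hys_def
    have hcard : Multiset.card ys = M := card_roots_P2 M b hbM
    set BM : ℂ := b (Fin.last M) with hBM_def
    set B0 : ℂ := b 0 with hB0_def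
    set Q : ℂ := (ys.map fun z => Polynomial.eval z (P1 K a)).prod with hQ_def
    -- split the product
    have hsplit : (ys.map fun z => z ^ k * Polynomial.eval z (P1 K a)).prod
        = ys.prod ^ k * Q := by
      rw [Multiset.prod_map_mul, hQ_def]
      congr 1
      have h1 := Multiset.prod_map_zpow (m := ys) (f := fun z : ℂ => z) (n := k)
      rw [Multiset.map_id'] at h1
      rw [← h1]
    -- compute the product of the roots
    have hprod_roots : ys.prod = (-1) ^ M * B0 * BM⁻¹ := by
      have hsp := Polynomial.Splits.eq_prod_roots
        (f := P2 M b) (IsAlgClosed.splits _)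
      rw [leadingCoeff_P2 M b hbM] at hsp
      have h0 : (P2 M b).coeff 0 = B0 := by
        have := coeff_P2 M b 0
        simpa using this
      rw [Polynomial.coeff_zero_eq_eval_zero, hsp] at h0
      rw [Polynomial.eval_mul, Polynomial.eval_C, Polynomial.eval_multiset_prod,
        Multiset.map_map] at h0
      have h2 : ((fun p : ℂ[X] => Polynomial.eval 0 p) ∘ fun z : ℂ => Polynomial.X - Polynomial.C z)
          = fun z : ℂ => -1 * z := by
        funext z
        simp
      rw [h2] at h0
      rw [Multiset.prod_map_mul] at h0
      have h3 : (Multiset.map (fun _ : ℂ => (-1 : ℂ)) ys).prod = (-1) ^ M := by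
        rw [Multiset.map_const', Multiset.prod_replicate, hcard]
      rw [h3, Multiset.map_id'] at h0
      rw [← hBM_def, ← hys_def] at h0
      rw [← h0]
      have hps : ((-1 : ℂ)) ^ M * (-1 : ℂ) ^ M = 1 := by
        rw [← pow_add]
        exact Even.neg_one_pow ⟨M, by ring⟩
      have hBMc : BM * BM⁻¹ = 1 := mul_inv_cancel₀ hbM
      calc ys.prod = (((-1 : ℂ)) ^ M * (-1 : ℂ) ^ M) * ys.prod * (BM * BM⁻¹) := by
            rw [hps, hBMc]
            ring
        _ = (-1 : ℂ) ^ M * (BM * ((-1 : ℂ) ^ M * ys.prod)) * BM⁻¹ := by ring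
    rw [hsplit, hprod_roots]
    -- now pure zpow algebra
    have hBM0 : BM ≠ 0 := hbM
    have hB00 : B0 ≠ 0 := hb0
    rw [mul_zpow, mul_zpow]
    have e1 : B0 ^ (-k) * B0 ^ k = 1 := by
      rw [zpow_neg]
      exact inv_mul_cancel₀ (zpow_ne_zero _ hB00)
    have e2 : BM ^ n * (BM⁻¹) ^ k = BM ^ K := by
      rw [inv_zpow, ← zpow_neg, ← zpow_add₀ hBM0, ← sub_eq_add_neg, ← hKint, zpow_natCast]
    have e3 : (((-1 : ℤ) ^ (k * (m - l)).natAbs : ℤ) : ℂ) = ((-1 : ℂ) ^ M) ^ k := by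
      have h4 : ((-1 : ℂ) ^ M) ^ k = ((-1 : ℂ)) ^ ((M : ℤ) * k) := by
        rw [← zpow_natCast (-1 : ℂ) M, ← zpow_mul]
      rw [h4, hMint]
      have h5 : (m - l) * k = k * (m - l) := mul_comm _ _
      rw [h5, neg_one_zpow_natAbs]
    calc (((-1 : ℤ) ^ (k * (m - l)).natAbs : ℤ) : ℂ) * (BM ^ K * Q)
        = (B0 ^ (-k) * B0 ^ k) * ((BM ^ n * (BM⁻¹) ^ k) * ((((-1 : ℤ) ^ (k * (m - l)).natAbs : ℤ) : ℂ) * Q)) := by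
          rw [e1, e2]
          ring
      _ = B0 ^ (-k) * BM ^ n * (((-1 : ℂ) ^ M) ^ k * B0 ^ k * (BM⁻¹) ^ k * Q) := by
          rw [e3]
          ring
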